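/- Let (G, α, β, m, ε, i, ⊕, G₀) be a transitive commutative group-groupoid with group unit e₀ ∈ G₀, and suppose the restriction of β to G^{e₀} = α⁻¹(e₀) is a split epimorphism of groups, with group-homomorphism section γ : G₀ → G^{e₀}. Then the map φ : G → G₀ × G(e₀) × G₀ given by φ(x) = (α(x), γ(α(x)) · x · γ(β(x))⁻¹, β(x)) is an isomorphism of group-groupoids from (G, G₀) onto the trivial group-groupoid B × A × B with A = G(e₀) (the isotropy group at e₀) and B = G₀. -/

import Mathlib

/-- A groupoid `G` over a base `G₀` (Definition 2.1): surjective source and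
target maps, a partial multiplication defined on composable pairs
(`tgt x = src y`), an injective unit map and an inversion, satisfying
associativity, the identity laws and the inverse laws. -/
structure Gpd (G : Type*) (G₀ : Type*) where
  src : G → G₀
  tgt : G → G₀
  mul : (x : G) → (y : G) → tgt x = src y → G
  unit : G₀ → G
  inv : G → G
  src_surj : Function.Surjective src
  tgt_surj : Function.Surjective tgt
  unit_inj : Function.Injective unit
  src_unit : ∀ u, src (unit u) = u
  tgt_unit : ∀ u, tgt (unit u) = u
  src_inv : ∀ x, src (inv x) = tgt x
  tgt_inv : ∀ x, tgt (inv x) = src x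
  assoc : ∀ x y z (h1 : tgt x = src y) (h2 : tgt y = src z)
      (h3 : tgt (mul x y h1) = src z) (h4 : tgt x = src (mul y z h2)),
      mul (mul x y h1) z h3 = mul x (mul y z h2) h4
  unit_mul : ∀ x, mul (unit (src x)) x (tgt_unit (src x)) = x
  mul_unit : ∀ x, mul x (unit (tgt x)) (src_unit (tgt x)).symm = x
  inv_mul : ∀ x, mul (inv x) x (tgt_inv x) = unit (tgt x)
  mul_inv : ∀ x, mul x (inv x) (src_inv x).symm = unit (src x)
/-- A morphism of groupoids (Definition 2.2): a pair of maps commuting with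
source and target and preserving the partial multiplication. -/
structure IsGpdHom {G G₀ G' G₀' : Type*} (𝒢 : Gpd G G₀) (𝒢' : Gpd G' G₀')
    (f : G → G') (f₀ : G₀ → G₀') : Prop where
  src_eq : ∀ x, 𝒢'.src (f x) = f₀ (𝒢.src x)
  tgt_eq : ∀ x, 𝒢'.tgt (f x) = f₀ (𝒢.tgt x)
  mul_eq : ∀ x y (h : 𝒢.tgt x = 𝒢.src y) (h' : 𝒢'.tgt (f x) = 𝒢'.src (f y)),
      f (𝒢.mul x y h) = 𝒢'.mul (f x) (f y) h'
/-- The anchor map of a groupoid. -/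
def Gpd.anchor {G G₀ : Type*} (𝒢 : Gpd G G₀) : G → G₀ × G₀ :=
  fun x => (𝒢.src x, 𝒢.tgt x)

/-- A groupoid is transitive if its anchor map is surjective. -/
def Gpd.Transitive {G G₀ : Type*} (𝒢 : Gpd G G₀) : Prop :=
  Function.Surjective 𝒢.anchor
/-- A group-groupoid in the sense of Definition 2.4: the total space and the
base carry group structures (written additively, as `⊕` in the paper), the
structure maps `src`, `tgt`, `unit`, `inv` are group homomorphisms, and the
interchange law between the partial multiplication and the group operation
holds. -/
def IsGrpGpd {G G₀ : Type*} [AddGroup G] [AddGroup G₀] (𝒢 : Gpd G G₀) : Prop :=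
  (∀ x y : G, 𝒢.src (x + y) = 𝒢.src x + 𝒢.src y) ∧
  (∀ x y : G, 𝒢.tgt (x + y) = 𝒢.tgt x + 𝒢.tgt y) ∧
  (∀ u v : G₀, 𝒢.unit (u + v) = 𝒢.unit u + 𝒢.unit v) ∧
  (∀ x y : G, 𝒢.inv (x + y) = 𝒢.inv x + 𝒢.inv y) ∧
  (∀ x y z t (hxy : 𝒢.tgt x = 𝒢.src y) (hzt : 𝒢.tgt z = 𝒢.src t)
      (h : 𝒢.tgt (x + z) = 𝒢.src (y + t)),
      𝒢.mul x y hxy + 𝒢.mul z t hzt = 𝒢.mul (x + z) (y + t) h)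
/-- The trivial group-groupoid `𝒢 = B × A × B` over `B`: `α (b₁,a,b₂) = b₁`,
`β (b₁,a,b₂) = b₂`, `ε b = (b, 0, b)`, `i (b₁,a,b₂) = (b₂, -a, b₁)` and
`(b₁,a₁,b₂) · (b₂,a₂,b₃) = (b₁, a₁ ⊕ a₂, b₃)`. -/
def trivGpd (A B : Type*) [AddGroup A] : Gpd (B × A × B) B where
  src x := x.1
  tgt x := x.2.2
  mul x y _ := (x.1, x.2.1 + y.2.1, y.2.2)
  unit b := (b, 0, b)
  inv x := (x.2.2, -x.2.1, x.1)
  src_surj b := ⟨(b, 0, b), rfl⟩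
  tgt_surj b := ⟨(b, 0, b), rfl⟩
  unit_inj _ _ h := congrArg Prod.fst h
  src_unit _ := rfl
  tgt_unit _ := rfl
  src_inv _ := rfl
  tgt_inv _ := rfl
  assoc x y z _ _ _ _ := by
    obtain ⟨b₁, a₁, b₂⟩ := x; obtain ⟨b₃, a₂, b₄⟩ := y; obtain ⟨b₅, a₃, b₆⟩ := z
    simp [add_assoc]
  unit_mul x := by obtain ⟨b₁, a, b₂⟩ := x; simp
  mul_unit x := by obtain ⟨b₁, a, b₂⟩ := x; simp
  inv_mul x := by obtain ⟨b₁, a, b₂⟩ := x; simp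
  mul_inv x := by obtain ⟨b₁, a, b₂⟩ := x; simp

/-- The isotropy group `G(e₀) = α⁻¹(e₀) ∩ β⁻¹(e₀)` at the group unit
`e₀ = 0` of the base, as an additive subgroup of `G`. -/
def isoSubgroup {G G₀ : Type*} [AddGroup G] [AddGroup G₀] (𝒢 : Gpd G G₀)
    (hs : ∀ x y : G, 𝒢.src (x + y) = 𝒢.src x + 𝒢.src y)
    (ht : ∀ x y : G, 𝒢.tgt (x + y) = 𝒢.tgt x + 𝒢.tgt y) :
    AddSubgroup G where
  carrier := {x | 𝒢.src x = 0 ∧ 𝒢.tgt x = 0}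
  add_mem' := by
    intro a b ha hb
    exact ⟨by rw [hs, ha.1, hb.1, add_zero], by rw [ht, ha.2, hb.2, add_zero]⟩
  zero_mem' := by
    constructor
    · have h := hs 0 0; rw [add_zero] at h; exact (left_eq_add.mp h)
    · have h := ht 0 0; rw [add_zero] at h; exact (left_eq_add.mp h)
  neg_mem' := by
    intro x hx
    have h0s : 𝒢.src 0 = 0 := by
      have h := hs 0 0; rw [add_zero] at h; exact (left_eq_add.mp h)
    have h0t : 𝒢.tgt 0 = 0 := by
      have h := ht 0 0; rw [add_zero] at h; exact (left_eq_add.mp h)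
    constructor
    · have h := hs (-x) x
      rw [neg_add_cancel, hx.1, add_zero, h0s] at h
      exact h.symm
    · have h := ht (-x) x
      rw [neg_add_cancel, hx.2, add_zero, h0t] at h
      exact h.symm

private lemma mul_congr' {G G₀ : Type*} (𝒢 : Gpd G G₀) {x x' y y' : G}
    (hx : x = x') (hy : y = y') (h : 𝒢.tgt x = 𝒢.src y) (h' : 𝒢.tgt x' = 𝒢.src y') :
    𝒢.mul x y h = 𝒢.mul x' y' h' := by subst hx; subst hy; rfl

/-- Theorem 3.1: a transitive commutative group-groupoid `(G, G₀)` whose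
target map restricted to `G^{e₀} = α⁻¹(e₀)` admits a group-homomorphism
section `γ : G₀ → G^{e₀}` is isomorphic, via
`φ x = (α x, γ (α x) · x · (γ (β x))⁻¹, β x)`, to the trivial group-groupoid
`B × A × B` with `A = G(e₀)` the isotropy group at `e₀` and `B = G₀`. -/
theorem stmt_19 {G G₀ : Type*} [AddCommGroup G] [AddCommGroup G₀]
    (𝒢 : Gpd G G₀) (h : IsGrpGpd 𝒢) (htrans : 𝒢.Transitive)
    (γ : G₀ → G)
    (hγsrc : ∀ u, 𝒢.src (γ u) = 0)
    (hγtgt : ∀ u, 𝒢.tgt (γ u) = u)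
    (hγadd : ∀ u v, γ (u + v) = γ u + γ v) :
    ∃ φ : G → G₀ × (isoSubgroup 𝒢 h.1 h.2.1) × G₀,
      (∀ x (h1 : 𝒢.tgt (γ (𝒢.src x)) = 𝒢.src x)
          (h2 : 𝒢.tgt (𝒢.mul (γ (𝒢.src x)) x h1) = 𝒢.src (𝒢.inv (γ (𝒢.tgt x)))),
        (φ x).1 = 𝒢.src x ∧
        ((φ x).2.1 : G) = 𝒢.mul (𝒢.mul (γ (𝒢.src x)) x h1) (𝒢.inv (γ (𝒢.tgt x))) h2 ∧
        (φ x).2.2 = 𝒢.tgt x) ∧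
      Function.Bijective φ ∧
      IsGpdHom 𝒢 (trivGpd (↥(isoSubgroup 𝒢 h.1 h.2.1)) G₀) φ id ∧
      (∀ x y : G, φ (x + y) = φ x + φ y) := by
  obtain ⟨hs, ht, hu, hi, hint⟩ := h
  -- basic facts
  have hs0 : 𝒢.src 0 = 0 := by
    have h := hs 0 0; rw [add_zero] at h; exact (left_eq_add.mp h)
  have ht0 : 𝒢.tgt 0 = 0 := by
    have h := ht 0 0; rw [add_zero] at h; exact (left_eq_add.mp h)
  have hu0 : 𝒢.unit 0 = 0 := by
    have h := hu 0 0; rw [add_zero] at h; exact (left_eq_add.mp h)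
  have hsneg : ∀ x : G, 𝒢.src (-x) = -𝒢.src x := by
    intro x
    have h := hs x (-x); rw [add_neg_cancel, hs0] at h
    exact (eq_neg_of_add_eq_zero_right h.symm)
  have htneg : ∀ x : G, 𝒢.tgt (-x) = -𝒢.tgt x := by
    intro x
    have h := ht x (-x); rw [add_neg_cancel, ht0] at h
    exact (eq_neg_of_add_eq_zero_right h.symm)
  have hssub : ∀ x y : G, 𝒢.src (x - y) = 𝒢.src x - 𝒢.src y := by
    intro x y; rw [sub_eq_add_neg, hs, hsneg, sub_eq_add_neg]
  have htsub : ∀ x y : G, 𝒢.tgt (x - y) = 𝒢.tgt x - 𝒢.tgt y := by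
    intro x y; rw [sub_eq_add_neg, ht, htneg, sub_eq_add_neg]
  -- the key formula for the partial multiplication
  have hmul : ∀ x y (hxy : 𝒢.tgt x = 𝒢.src y),
      𝒢.mul x y hxy = x + y - 𝒢.unit (𝒢.tgt x) := by
    intro x y hxy
    have h1 : 𝒢.tgt x = 𝒢.src (𝒢.unit (𝒢.tgt x)) := (𝒢.src_unit _).symm
    have h2 : 𝒢.tgt (0:G) = 𝒢.src (y - 𝒢.unit (𝒢.src y)) := by
      rw [ht0, hssub, 𝒢.src_unit, sub_self]
    have h3 : 𝒢.tgt (x + 0) = 𝒢.src (𝒢.unit (𝒢.tgt x) + (y - 𝒢.unit (𝒢.src y))) := by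
      rw [ht, ht0, add_zero, hs, 𝒢.src_unit, hssub, 𝒢.src_unit, hxy]
      abel
    have key := hint x (𝒢.unit (𝒢.tgt x)) 0 (y - 𝒢.unit (𝒢.src y)) h1 h2 h3
    have e1 : 𝒢.mul x (𝒢.unit (𝒢.tgt x)) h1 = x := 𝒢.mul_unit x
    have h2' : 𝒢.tgt (𝒢.unit (𝒢.src (y - 𝒢.unit (𝒢.src y)))) = 𝒢.src (y - 𝒢.unit (𝒢.src y)) :=
      𝒢.tgt_unit _
    have e2 : 𝒢.mul (0:G) (y - 𝒢.unit (𝒢.src y)) h2 = y - 𝒢.unit (𝒢.src y) := by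
      have hz : (0:G) = 𝒢.unit (𝒢.src (y - 𝒢.unit (𝒢.src y))) := by
        rw [hssub, 𝒢.src_unit, sub_self, hu0]
      rw [mul_congr' 𝒢 hz rfl h2 h2']
      exact 𝒢.unit_mul _
    have e3 : 𝒢.mul (x + 0) (𝒢.unit (𝒢.tgt x) + (y - 𝒢.unit (𝒢.src y))) h3 = 𝒢.mul x y hxy := by
      refine mul_congr' 𝒢 (add_zero x) ?_ h3 hxy
      rw [hxy]; abel
    rw [e1, e2, e3] at key
    rw [← key, hxy]; abel
  -- formula for the inversion
  have hinv : ∀ x : G, 𝒢.inv x = 𝒢.unit (𝒢.src x) + 𝒢.unit (𝒢.tgt x) - x := by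
    intro x
    have h := 𝒢.mul_inv x
    rw [hmul] at h
    rw [← h]; abel
  -- the middle component
  set m : G → G := fun x => γ (𝒢.src x) + x - γ (𝒢.tgt x) - 𝒢.unit (𝒢.src x) with hm
  have hmem : ∀ x : G, m x ∈ isoSubgroup 𝒢 hs ht := by
    intro x
    constructor
    · show 𝒢.src (m x) = 0
      simp only [hm, hssub, hs, hγsrc, 𝒢.src_unit]
      abel
    · show 𝒢.tgt (m x) = 0
      simp only [hm, htsub, ht, hγtgt, 𝒢.tgt_unit]
      abel
  refine ⟨fun x => (𝒢.src x, ⟨m x, hmem x⟩, 𝒢.tgt x), ?_, ?_, ?_, ?_⟩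
  · -- the description of φ
    intro x h1 h2
    refine ⟨rfl, ?_, rfl⟩
    rw [hmul, hmul, hinv]
    have e1 : 𝒢.tgt (γ (𝒢.src x) + x - 𝒢.unit (𝒢.tgt (γ (𝒢.src x)))) = 𝒢.tgt x := by
      rw [htsub, ht, hγtgt, 𝒢.tgt_unit]; abel
    rw [e1]
    simp only [hm, hγsrc, hγtgt, hu0, hγtgt]
    abel
  · -- bijectivity
    constructor
    · intro x y hxy
      have h1 : 𝒢.src x = 𝒢.src y := congrArg Prod.fst hxy
      have h2 : 𝒢.tgt x = 𝒢.tgt y := congrArg (fun p => p.2.2) hxy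
      have h3 : m x = m y := congrArg (fun p => (p.2.1 : G)) hxy
      have hψ : ∀ z : G, -γ (𝒢.src z) + m z + γ (𝒢.tgt z) + 𝒢.unit (𝒢.src z) = z := by
        intro z; simp only [hm]; abel
      rw [← hψ x, ← hψ y, h1, h2, h3]
    · rintro ⟨a, ⟨v, hv1, hv2⟩, b⟩
      refine ⟨-γ a + v + γ b + 𝒢.unit a, ?_⟩
      have hsx : 𝒢.src (-γ a + v + γ b + 𝒢.unit a) = a := by
        simp only [hs, hsneg, hγsrc, hv1, 𝒢.src_unit]; abel
      have htx : 𝒢.tgt (-γ a + v + γ b + 𝒢.unit a) = b := by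
        simp only [ht, htneg, hγtgt, hv2, 𝒢.tgt_unit]; abel
      refine Prod.ext hsx (Prod.ext (Subtype.ext ?_) htx)
      show m _ = v
      simp only [hm, hsx, htx]
      abel
  · -- groupoid homomorphism
    refine ⟨fun x => rfl, fun x => rfl, ?_⟩
    intro x y hxy h'
    have h1 : 𝒢.src (𝒢.mul x y hxy) = 𝒢.src x := by
      rw [hmul, hssub, hs, 𝒢.src_unit, hxy]; abel
    have h2 : 𝒢.tgt (𝒢.mul x y hxy) = 𝒢.tgt y := by
      rw [hmul, htsub, ht, 𝒢.tgt_unit]; abel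
    refine Prod.ext h1 (Prod.ext (Subtype.ext ?_) h2)
    show m (𝒢.mul x y hxy) = m x + m y
    rw [hmul, hxy]
    have hsrc : 𝒢.src (x + y - 𝒢.unit (𝒢.src y)) = 𝒢.src x := by
      rw [hssub, hs, 𝒢.src_unit]; abel
    have htgt : 𝒢.tgt (x + y - 𝒢.unit (𝒢.src y)) = 𝒢.tgt y := by
      rw [htsub, ht, 𝒢.tgt_unit, ← hxy]; abel
    simp only [hm, hsrc, htgt, hxy]
    abel
  · -- additivity
    intro x y
    refine Prod.ext (hs x y) (Prod.ext (Subtype.ext ?_) (ht x y))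
    show m (x + y) = m x + m y
    simp only [hm, hs, ht, hγadd, hu]
    abel
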